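/- Let L > 0, A ≥ 0 a constant, B : [0, L] → ℝ continuous and nonnegative, and V : [0, L] → ℝ differentiable with V ≥ 0, V(0) = 0, and V'(ξ) ≤ 2A √(V(ξ)) + 2 B(ξ) V(ξ) for all ξ ∈ [0, L]. Then √(V(ξ)) ≤ A ∫₀^ξ exp(∫_η^ξ B(ζ) dζ) dη for all ξ ∈ [0, L]. -/

import Mathlib

open MeasureTheory intervalIntegral Real Set

/-- Square-root Gronwall (comparison-principle) estimate: if `V ≥ 0`,
`V(0) = 0` and `V' ≤ 2A√V + 2BV` on `[0, L]`, then
`√(V(ξ)) ≤ A ∫₀^ξ exp(∫_η^ξ B) dη`. -/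
theorem sqrt_gronwall
    (L A : ℝ) (hL : 0 < L) (hA : 0 ≤ A)
    (B : ℝ → ℝ) (hB_cont : ContinuousOn B (Set.Icc (0:ℝ) L))
    (hB_nonneg : ∀ ξ ∈ Set.Icc (0:ℝ) L, 0 ≤ B ξ)
    (V : ℝ → ℝ)
    (hV_diff : ∀ ξ ∈ Set.Icc (0:ℝ) L, DifferentiableAt ℝ V ξ)
    (hV_nonneg : ∀ ξ ∈ Set.Icc (0:ℝ) L, 0 ≤ V ξ)
    (hV0 : V 0 = 0)
    (hV' : ∀ ξ ∈ Set.Icc (0:ℝ) L,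
      deriv V ξ ≤ 2 * A * Real.sqrt (V ξ) + 2 * B ξ * V ξ) :
    ∀ ξ ∈ Set.Icc (0:ℝ) L,
      Real.sqrt (V ξ) ≤ A * ∫ η in (0:ℝ)..ξ, Real.exp (∫ ζ in η..ξ, B ζ) := by
  -- continuous extension of B to all of ℝ
  set Bt : ℝ → ℝ := fun x => B (projIcc 0 L hL.le x) with hBt_def
  have hBt_cont : Continuous Bt :=
    hB_cont.comp_continuous (continuous_subtype_val.comp (continuous_projIcc))
      (fun x => (projIcc 0 L hL.le x).2)
  have hBt_eq : ∀ x ∈ Set.Icc (0:ℝ) L, Bt x = B x := by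
    intro x hx
    simp [hBt_def, projIcc_of_mem hL.le hx]
  have hBt_nonneg : ∀ x, 0 ≤ Bt x := fun x => hB_nonneg _ (projIcc 0 L hL.le x).2
  set F : ℝ → ℝ := fun x => ∫ t in (0:ℝ)..x, Bt t with hF_def
  have hF : ∀ x, HasDerivAt F (Bt x) x := by
    intro x
    exact intervalIntegral.integral_hasDerivAt_right
      (hBt_cont.intervalIntegrable _ _)
      hBt_cont.aestronglyMeasurable.stronglyMeasurableAtFilter
      hBt_cont.continuousAt
  have hVcont : ContinuousOn V (Set.Icc (0:ℝ) L) :=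
    fun x hx => (hV_diff x hx).continuousAt.continuousWithinAt
  have hEcont : Continuous fun η => Real.exp (-(F η)) := by
    have : Continuous F := by
      rw [continuous_iff_continuousAt]; exact fun x => (hF x).continuousAt
    exact Real.continuous_exp.comp this.neg
  -- key comparison estimate with parameter ε
  have key : ∀ ε : ℝ, 0 < ε → ∀ ξ ∈ Set.Icc (0:ℝ) L,
      Real.sqrt (V ξ + ε ^ 2) ≤
        Real.exp (F ξ) * (ε + ∫ η in (0:ℝ)..ξ, (A + ε) * Real.exp (-(F η))) := by
    intro ε hε
    set g : ℝ → ℝ :=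
      fun x => Real.exp (F x) * (ε + ∫ η in (0:ℝ)..x, (A + ε) * Real.exp (-(F η))) with hg_def
    have hg : ∀ x, HasDerivAt g (Bt x * g x + (A + ε)) x := by
      intro x
      have h1 : HasDerivAt (fun y => Real.exp (F y)) (Real.exp (F x) * Bt x) x := (hF x).exp
      have h2 : HasDerivAt (fun y => ε + ∫ η in (0:ℝ)..y, (A + ε) * Real.exp (-(F η)))
          ((A + ε) * Real.exp (-(F x))) x := by
        refine HasDerivAt.const_add ε ?_
        exact intervalIntegral.integral_hasDerivAt_right
          ((continuous_const.mul hEcont).intervalIntegrable _ _)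
          (continuous_const.mul hEcont).aestronglyMeasurable.stronglyMeasurableAtFilter
          (continuous_const.mul hEcont).continuousAt
      have h3 := h1.mul h2
      have hx0 : Real.exp (F x) * Real.exp (-(F x)) = 1 := by
        rw [← Real.exp_add]; simp
      refine h3.congr_deriv ?_
      simp only [hg_def]
      nlinarith [hx0]
    set W : ℝ → ℝ := fun x => Real.sqrt (V x + ε ^ 2) with hW_def
    have hWcont : ContinuousOn W (Set.Icc (0:ℝ) L) :=
      Real.continuous_sqrt.comp_continuousOn (hVcont.add continuousOn_const)
    have hWpos : ∀ x ∈ Set.Icc (0:ℝ) L, 0 < W x := by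
      intro x hx
      have : 0 < V x + ε ^ 2 := by nlinarith [hV_nonneg x hx]
      exact Real.sqrt_pos.2 this
    have hW' : ∀ x ∈ Set.Ico (0:ℝ) L,
        HasDerivWithinAt W (deriv V x / (2 * W x)) (Set.Ici x) x := by
      intro x hx
      have hx' : x ∈ Set.Icc (0:ℝ) L := Set.Ico_subset_Icc_self hx
      have hpos : 0 < V x + ε ^ 2 := by nlinarith [hV_nonneg x hx']
      have h1 : HasDerivAt (fun y => V y + ε ^ 2) (deriv V x) x :=
        ((hV_diff x hx').hasDerivAt).add_const _
      have h2 := (Real.hasDerivAt_sqrt hpos.ne').comp x h1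
      have : HasDerivAt W (deriv V x / (2 * W x)) x := by
        refine h2.congr_deriv ?_
        simp only [hW_def]
        ring
      exact this.hasDerivWithinAt
    have ha : W 0 ≤ g 0 := by
      simp only [hW_def, hg_def, hF_def, hV0, intervalIntegral.integral_same, zero_add, add_zero,
        Real.exp_zero, one_mul]
      rw [Real.sqrt_sq hε.le]
    have bound : ∀ x ∈ Set.Ico (0:ℝ) L, W x = g x →
        deriv V x / (2 * W x) < Bt x * g x + (A + ε) := by
      intro x hx hWg
      have hx' : x ∈ Set.Icc (0:ℝ) L := Set.Ico_subset_Icc_self hx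
      have hw : 0 < W x := hWpos x hx'
      have hs : Real.sqrt (V x) ≤ W x := by
        apply Real.sqrt_le_sqrt; nlinarith
      have hss : Real.sqrt (V x) ^ 2 = V x := Real.sq_sqrt (hV_nonneg x hx')
      have hd : deriv V x ≤ 2 * A * Real.sqrt (V x) + 2 * Bt x * V x := by
        rw [hBt_eq x hx']; exact hV' x hx'
      rw [div_lt_iff₀ (by positivity), ← hWg]
      have hsq : V x ≤ W x ^ 2 := by nlinarith [Real.sqrt_nonneg (V x)]
      nlinarith [mul_pos hε hw,
        mul_le_mul_of_nonneg_left hs (by linarith : (0:ℝ) ≤ 2 * A),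
        mul_le_mul_of_nonneg_left hsq (by linarith [hBt_nonneg x] : (0:ℝ) ≤ 2 * Bt x)]
    exact fun ξ hξ =>
      image_le_of_deriv_right_lt_deriv_boundary hWcont hW' ha hg bound hξ
  -- conclusion
  intro ξ hξ
  have hξ0 : (0:ℝ) ≤ ξ := hξ.1
  have hsub : Set.uIcc (0:ℝ) ξ ⊆ Set.Icc (0:ℝ) L :=
    Set.uIcc_subset_Icc (Set.left_mem_Icc.2 hL.le) hξ
  have h1 : (∫ η in (0:ℝ)..ξ, Real.exp (∫ ζ in η..ξ, B ζ)) =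
      Real.exp (F ξ) * ∫ η in (0:ℝ)..ξ, Real.exp (-(F η)) := by
    rw [← intervalIntegral.integral_const_mul]
    apply intervalIntegral.integral_congr
    intro η hη
    have hη' : η ∈ Set.Icc (0:ℝ) L := hsub hη
    beta_reduce
    have e1 : (∫ ζ in η..ξ, B ζ) = ∫ ζ in η..ξ, Bt ζ := by
      apply intervalIntegral.integral_congr
      intro ζ hζ
      exact (hBt_eq ζ (Set.uIcc_subset_Icc hη' hξ hζ)).symm
    have e2 : (∫ ζ in η..ξ, Bt ζ) = F ξ - F η :=
      (intervalIntegral.integral_interval_sub_left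
        (hBt_cont.intervalIntegrable _ _) (hBt_cont.intervalIntegrable _ _)).symm
    rw [e1, e2, show F ξ - F η = F ξ + -(F η) by ring, Real.exp_add]
  rw [h1]
  set I : ℝ := ∫ η in (0:ℝ)..ξ, Real.exp (-(F η)) with hI_def
  have hI_nonneg : 0 ≤ I := by
    apply intervalIntegral.integral_nonneg hξ0
    intro x _; positivity
  set C : ℝ := Real.exp (F ξ) * (1 + I) with hC_def
  have hC : 0 < C := by positivity
  apply le_of_forall_pos_le_add
  intro δ hδ
  have hεpos : 0 < δ / C := div_pos hδ hC
  have hkey := key (δ / C) hεpos ξ hξ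
  have hsplit : (∫ η in (0:ℝ)..ξ, (A + δ / C) * Real.exp (-(F η))) = (A + δ / C) * I := by
    rw [hI_def, ← intervalIntegral.integral_const_mul]
  rw [hsplit] at hkey
  have hmono : Real.sqrt (V ξ) ≤ Real.sqrt (V ξ + (δ / C) ^ 2) := by
    apply Real.sqrt_le_sqrt; nlinarith
  have hcc : (δ / C) * C = δ := div_mul_cancel₀ δ hC.ne'
  have : Real.exp (F ξ) * (δ / C + (A + δ / C) * I) =
      A * (Real.exp (F ξ) * I) + (δ / C) * C := by
    rw [hC_def]; ring
  rw [this, hcc] at hkey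
  linarith
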